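/- Let f, g : F_q^d × F_q^d → [0,∞) be nonnegative functions. Then |Σ_{x,y,z,w : x·z = t, y·w = t} f(x,y)g(z,w) − q^{-2}·||f||₁·||g||₁| ≤ 2q^{d-1}·||f||₂·||g||₂ + q^{(d-3)/2}·(||F||₂·||G||₂ + ||F'||₂·||G'||₂). -/

import Mathlib

open Finset
set_option linter.unusedSectionVars false
set_option linter.unnecessarySeqFocus false
set_option maxHeartbeats 1000000


lemma fiber_eq {V W : Type*} [AddCommGroup V] [Fintype V] [DecidableEq V] [AddCommGroup W]
    [DecidableEq W] (φ : V →+ W) (hs : Function.Surjective φ) (y y' : W) :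
    #(univ.filter (fun x => φ x = y)) = #(univ.filter (fun x => φ x = y')) := by
  obtain ⟨x₀, hx₀⟩ := hs (y' - y)
  apply Finset.card_bij (fun x _ => x + x₀)
  · intro a ha
    simp only [mem_filter, mem_univ, true_and] at ha ⊢
    simp [map_add, ha, hx₀]
  · intro a ha b hb h; exact add_right_cancel h
  · intro b hb
    refine ⟨b - x₀, ?_, by abel⟩
    simp only [mem_filter, mem_univ, true_and] at hb ⊢
    rw [map_sub, hb, hx₀]; abel

lemma fiber_card {V W : Type*} [AddCommGroup V] [Fintype V] [DecidableEq V] [AddCommGroup W]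
    [Fintype W] [DecidableEq W] (φ : V →+ W) (hs : Function.Surjective φ) (y : W) :
    Fintype.card W * #(univ.filter (fun x => φ x = y)) = Fintype.card V := by
  have h1 : (Fintype.card V : ℕ) = ∑ w : W, #(univ.filter (fun x => φ x = w)) := by
    rw [← Finset.card_univ]
    exact Finset.card_eq_sum_card_fiberwise (fun x _ => mem_univ _)
  rw [h1]
  rw [Finset.sum_congr rfl (fun w _ => fiber_eq φ hs w y)]
  simp [Finset.sum_const, Finset.card_univ, mul_comm]


variable {F : Type*} [Field F] [Fintype F] [DecidableEq F] {d : ℕ}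

def dotHom (z : Fin d → F) : (Fin d → F) →+ F :=
  AddMonoidHom.mk' (fun x => ∑ j, x j * z j)
    (by intro a b; simp [add_mul, Finset.sum_add_distrib])

lemma dotHom_apply (z x : Fin d → F) : dotHom z x = ∑ j, x j * z j := rfl

lemma dot_single (z : Fin d → F) (j : Fin d) (c : F) :
    ∑ i, (Pi.single j c : Fin d → F) i * z i = c * z j := by
  rw [Finset.sum_eq_single j]
  · simp
  · intro i _ hij; simp [Pi.single_apply, hij]
  · simp

lemma dot_smul_left (c : F) (x z : Fin d → F) :
    ∑ j, (c • x) j * z j = c * ∑ j, x j * z j := by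
  simp [Finset.mul_sum, mul_assoc]

lemma dot_add_left (x y z : Fin d → F) :
    ∑ j, (x + y) j * z j = (∑ j, x j * z j) + ∑ j, y j * z j := by
  simp [add_mul, Finset.sum_add_distrib]

lemma exists_coord_ne {z : Fin d → F} (hz : z ≠ 0) : ∃ j, z j ≠ 0 := by
  obtain ⟨j, hj⟩ := Function.ne_iff.mp hz
  exact ⟨j, hj⟩

lemma surj_dot {z : Fin d → F} (hz : z ≠ 0) : Function.Surjective (dotHom z) := by
  obtain ⟨j, hj⟩ := exists_coord_ne hz
  intro a
  refine ⟨Pi.single j (a * (z j)⁻¹), ?_⟩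
  rw [dotHom_apply, dot_single]
  field_simp

lemma eq_smul_of_prop {z z' : Fin d → F} (c : F) (h : ∀ x : Fin d → F,
    ∑ j, x j * z' j = c * ∑ j, x j * z j) : z' = c • z := by
  funext j
  have := h (Pi.single j 1)
  rw [dot_single, dot_single] at this
  simpa using this

lemma exists_perp {z z' : Fin d → F} (hz : z ≠ 0)
    (hnp : ¬ ∃ c : F, z' = c • z) :
    ∃ w : Fin d → F, (∑ j, w j * z j) = 0 ∧ (∑ j, w j * z' j) ≠ 0 := by
  by_contra hcon
  push_neg at hcon
  obtain ⟨u, hu⟩ := exists_coord_ne hz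
  set uz : F := ∑ j, (Pi.single u 1 : Fin d → F) j * z j with huz
  have huz' : uz = z u := by rw [huz, dot_single]; simp
  have huzne : uz ≠ 0 := by rw [huz']; exact hu
  set U : Fin d → F := Pi.single u 1
  set c : F := (∑ j, U j * z' j) / uz with hc
  apply hnp
  refine ⟨c, eq_smul_of_prop c ?_⟩
  intro x
  have hw : ∀ j ∈ (univ : Finset (Fin d)), (x - ((∑ i, x i * z i)/uz) • U) j * z j
      = x j * z j - (((∑ i, x i * z i)/uz) • U) j * z j := by
    intro j _; simp [sub_mul]
  have h0 : ∑ j, (x - ((∑ i, x i * z i)/uz) • U) j * z j = 0 := by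
    rw [Finset.sum_congr rfl hw, Finset.sum_sub_distrib, dot_smul_left]
    field_simp [huz]
    rw [← huz]; ring
  have h1 := hcon _ h0
  have h2 : ∀ j ∈ (univ : Finset (Fin d)), (x - ((∑ i, x i * z i)/uz) • U) j * z' j
      = x j * z' j - (((∑ i, x i * z i)/uz) • U) j * z' j := by
    intro j _; simp [sub_mul]
  rw [Finset.sum_congr rfl h2, Finset.sum_sub_distrib, dot_smul_left, sub_eq_zero] at h1
  rw [h1, hc]
  field_simp

def pairHom (z z' : Fin d → F) : (Fin d → F) →+ F × F :=
  AddMonoidHom.mk' (fun x => (∑ j, x j * z j, ∑ j, x j * z' j))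
    (by intro a b; simp [add_mul, Finset.sum_add_distrib, Prod.ext_iff])

lemma surj_pair {z z' : Fin d → F} (hz : z ≠ 0) (hnp : ¬ ∃ c : F, z' = c • z) :
    Function.Surjective (pairHom z z') := by
  have hz' : z' ≠ 0 := by
    rintro rfl; exact hnp ⟨0, by simp⟩
  have hnp' : ¬ ∃ c : F, z = c • z' := by
    rintro ⟨c, rfl⟩
    have hc : c ≠ 0 := by rintro rfl; simp at hz
    exact hnp ⟨c⁻¹, by rw [smul_smul, inv_mul_cancel₀ hc, one_smul]⟩
  obtain ⟨w, hw0, hw1⟩ := exists_perp hz hnp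
  obtain ⟨w', hw0', hw1'⟩ := exists_perp hz' hnp'
  rintro ⟨a, b⟩
  refine ⟨(a / (∑ j, w' j * z j)) • w' + (b / (∑ j, w j * z' j)) • w, ?_⟩
  have e1 : ∀ (v : Fin d → F),
      ∑ j, ((a / (∑ j, w' j * z j)) • w' + (b / (∑ j, w j * z' j)) • w) j * v j
      = (a / (∑ j, w' j * z j)) * (∑ j, w' j * v j)
        + (b / (∑ j, w j * z' j)) * (∑ j, w j * v j) := by
    intro v
    simp [add_mul, Finset.sum_add_distrib, Finset.mul_sum, mul_assoc]
  show (_, _) = (a, b)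
  rw [Prod.ext_iff]
  constructor
  · show (∑ j, _ * z j) = a
    rw [e1 z, hw0]
    field_simp
    ring
  · show (∑ j, _ * z' j) = b
    rw [e1 z', hw0']
    field_simp
    ring

lemma count_dot {z : Fin d → F} (hd : 1 ≤ d) (hz : z ≠ 0) (s : F) :
    #(univ.filter (fun x : Fin d → F => ∑ j, x j * z j = s)) = Fintype.card F ^ (d - 1) := by
  have h := fiber_card (dotHom z) (surj_dot hz) s
  simp only [dotHom_apply] at h
  obtain ⟨e, rfl⟩ := Nat.exists_eq_add_of_le hd
  have e1 : Fintype.card (Fin (1 + e) → F) = Fintype.card F * Fintype.card F ^ e := by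
    rw [show Fintype.card (Fin (1 + e) → F) = Fintype.card F ^ (1 + e) by simp, pow_add,
      pow_one]
  rw [e1] at h
  simp only [Nat.add_sub_cancel_left]
  exact Nat.eq_of_mul_eq_mul_left Fintype.card_pos h

lemma count_pair {z z' : Fin d → F} (hd : 2 ≤ d) (hz : z ≠ 0)
    (hnp : ¬ ∃ c : F, z' = c • z) (s s' : F) :
    #(univ.filter (fun x : Fin d → F => (∑ j, x j * z j) = s ∧ (∑ j, x j * z' j) = s'))
      = Fintype.card F ^ (d - 2) := by
  have h := fiber_card (pairHom z z') (surj_pair hz hnp) (s, s')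
  have : ∀ x : Fin d → F, (pairHom z z' x = (s, s')) ↔
      ((∑ j, x j * z j) = s ∧ (∑ j, x j * z' j) = s') := by
    intro x; rw [Prod.ext_iff]; exact Iff.rfl
  simp only [this] at h
  obtain ⟨e, rfl⟩ := Nat.exists_eq_add_of_le hd
  have e1 : Fintype.card (Fin (2 + e) → F) = Fintype.card (F × F) * Fintype.card F ^ e := by
    rw [show Fintype.card (Fin (2 + e) → F) = Fintype.card F ^ (2 + e) by simp, pow_add,
      Fintype.card_prod]
    ring
  rw [e1] at h
  simp only [Nat.add_sub_cancel_left]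
  exact Nat.eq_of_mul_eq_mul_left (by positivity) h



def Par (z z' : Fin d → F) : Prop := z ≠ 0 ∧ z' ≠ 0 ∧ ∃ c : F, z' = c • z

instance (z z' : Fin d → F) : Decidable (Par z z') := by
  unfold Par; infer_instance

lemma par_smul_ne_zero {z z' : Fin d → F} (h : Par z z') :
    ∃ c : F, c ≠ 0 ∧ z' = c • z := by
  obtain ⟨hz, hz', c, hc⟩ := h
  refine ⟨c, ?_, hc⟩
  rintro rfl; rw [zero_smul] at hc; exact hz' hc

lemma par_symm {z z' : Fin d → F} (h : Par z z') : Par z' z := by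
  obtain ⟨c, hc, rfl⟩ := par_smul_ne_zero h
  exact ⟨h.2.1, h.1, c⁻¹, by rw [smul_smul, inv_mul_cancel₀ hc, one_smul]⟩

lemma par_iff {z z' : Fin d → F} (h : Par z z') (w : Fin d → F) :
    Par z w ↔ Par z' w := by
  have h' := par_smul_ne_zero h
  obtain ⟨c, hc, hzz⟩ := h'
  constructor
  · rintro ⟨hz, hw, μ, rfl⟩
    exact ⟨h.2.1, hw, μ * c⁻¹, by
      rw [hzz, smul_smul, mul_assoc, inv_mul_cancel₀ hc, mul_one]⟩
  · rintro ⟨hz', hw, μ, rfl⟩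
    exact ⟨h.1, hw, μ * c, by rw [hzz, smul_smul]⟩

lemma smul_inj_coord {z : Fin d → F} (hz : z ≠ 0) {c c' : F}
    (h : c • z = c' • z) : c = c' := by
  obtain ⟨j, hj⟩ := Function.ne_iff.mp hz
  have := congrFun h j
  simp only [Pi.smul_apply, smul_eq_mul] at this
  exact mul_right_cancel₀ hj this

lemma par_count {z' : Fin d → F} (hz' : z' ≠ 0) :
    ∑ z : Fin d → F, (if Par z z' then (1:ℝ) else 0)
      = (Fintype.card F : ℝ) - 1 := by
  rw [Finset.sum_boole]
  have hcard : #(univ.filter (fun z : Fin d → F => Par z z')) = Fintype.card F - 1 := by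
    have hbij : #(univ.filter (fun c : F => c ≠ 0)) =
        #(univ.filter (fun z : Fin d → F => Par z z')) := by
      apply Finset.card_bij (fun c _ => c • z')
      · intro c hc
        simp only [mem_filter, mem_univ, true_and] at hc ⊢
        exact ⟨smul_ne_zero hc hz', hz', c⁻¹, by rw [smul_smul, inv_mul_cancel₀ hc, one_smul]⟩
      · intro c hc c' hc' h
        exact smul_inj_coord hz' h
      · intro z hz
        simp only [mem_filter, mem_univ, true_and] at hz
        obtain ⟨c, hc, hcz⟩ := par_smul_ne_zero hz
        refine ⟨c⁻¹, ?_, ?_⟩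
        · simp [inv_ne_zero hc]
        · rw [hcz, smul_smul, inv_mul_cancel₀ hc, one_smul]
    rw [← hbij]
    rw [Finset.filter_ne' univ 0, Finset.card_erase_of_mem (mem_univ 0), Finset.card_univ]
  rw [hcard, Nat.cast_sub Fintype.card_pos, Nat.cast_one]

lemma sum_ite_const {α : Type*} [Fintype α] (P : α → Prop) [DecidablePred P] (K : ℝ) :
    ∑ z : α, (if P z then K else 0) = K * ∑ z : α, (if P z then (1:ℝ) else 0) := by
  rw [Finset.mul_sum]
  apply Finset.sum_congr rfl
  intro z _
  by_cases hp : P z <;> simp [hp]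

lemma T_nonneg (b : (Fin d → F) → ℝ) :
    0 ≤ ∑ z : Fin d → F, ∑ z' : Fin d → F,
      (if Par z z' then b z * b z' else 0) := by
  classical
  obtain ⟨h, hdef⟩ : ∃ h : (Fin d → F) → ℝ,
      ∀ z, h z = ∑ z' : Fin d → F, if Par z z' then b z' else 0 :=
    ⟨_, fun z => rfl⟩
  have h0 : h 0 = 0 := by
    rw [hdef]
    apply Finset.sum_eq_zero
    intro z' _
    have : ¬ Par 0 z' := fun hp => hp.1 rfl
    simp [this]
  have hq1 : (1:ℝ) < Fintype.card F := by exact_mod_cast Fintype.one_lt_card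
  have hT : ∑ z : Fin d → F, ∑ z', (if Par z z' then b z * b z' else 0)
      = ∑ z : Fin d → F, b z * h z := by
    apply Finset.sum_congr rfl
    intro z _
    rw [hdef, Finset.mul_sum]
    apply Finset.sum_congr rfl
    intro z' _
    by_cases hp : Par z z' <;> simp [hp]
  have key : ∑ z : Fin d → F, (h z)^2
      = ((Fintype.card F : ℝ) - 1) * ∑ z : Fin d → F, b z * h z := by
    have step1 : ∀ z : Fin d → F, (h z)^2 = ∑ z', if Par z z' then b z' * h z' else 0 := by
      intro z
      rw [sq, hdef, Finset.sum_mul]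
      apply Finset.sum_congr rfl
      intro z' _
      by_cases hp : Par z z'
      · simp only [hp, if_true]
        congr 1
        rw [hdef]
        apply Finset.sum_congr rfl
        intro w _
        exact if_congr (par_iff hp w) rfl rfl
      · simp [hp]
    calc ∑ z : Fin d → F, (h z)^2
        = ∑ z : Fin d → F, ∑ z', (if Par z z' then b z' * h z' else 0) :=
          Finset.sum_congr rfl (fun z _ => step1 z)
      _ = ∑ z' : Fin d → F, ∑ z, (if Par z z' then b z' * h z' else 0) := Finset.sum_comm
      _ = ∑ z' : Fin d → F, (b z' * h z') * ∑ z, (if Par z z' then (1:ℝ) else 0) :=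
          Finset.sum_congr rfl (fun z' _ => by
            rw [sum_ite_const (fun z => Par z z') (b z' * h z')])
      _ = ((Fintype.card F : ℝ) - 1) * ∑ z' : Fin d → F, b z' * h z' := by
          rw [Finset.mul_sum]
          apply Finset.sum_congr rfl
          intro z' _
          by_cases hz' : z' = 0
          · subst hz'
            rw [h0]
            have : ∀ z : Fin d → F, ¬ Par z 0 := fun z hp => hp.2.1 rfl
            simp [this]
          · rw [par_count hz']; ring
  have h1 : (0:ℝ) ≤ ∑ z : Fin d → F, (h z)^2 := by positivity
  rw [key] at h1
  rw [hT]
  nlinarith [h1, hq1]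

noncomputable def Mk {F : Type*} [Field F] [Fintype F] [DecidableEq F] {d : ℕ} (t : F)
    (x z : Fin d → F) : ℝ :=
  (if (∑ j, x j * z j) = t then 1 else 0) - (Fintype.card F : ℝ)⁻¹

lemma par_def (z z' : Fin d → F) :
    Par z z' ↔ (z ≠ 0 ∧ z' ≠ 0 ∧ ∃ c : F, z' = c • z) := Iff.rfl

section K
variable (t : F)


lemma qr_pos : (0:ℝ) < (Fintype.card F : ℝ) := by exact_mod_cast Fintype.card_pos

lemma sum_ind (hd1 : 1 ≤ d) {z : Fin d → F} (hz : z ≠ 0) (s : F) :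
    ∑ x : Fin d → F, (if (∑ j, x j * z j) = s then (1:ℝ) else 0)
      = (Fintype.card F : ℝ) ^ (d-1) := by
  rw [Finset.sum_boole, count_dot hd1 hz s]
  push_cast; ring

lemma sum_ind_zero {s : F} (hs : s ≠ 0) :
    ∑ x : Fin d → F, (if (∑ j, x j * (0 : Fin d → F) j) = s then (1:ℝ) else 0) = 0 := by
  apply Finset.sum_eq_zero
  intro x _
  have : (∑ j, x j * (0 : Fin d → F) j) = 0 := by simp
  rw [this]
  simp [hs.symm, Ne.symm hs]

lemma ind_mul (P Q : Prop) [Decidable P] [Decidable Q] :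
    (if P then (1:ℝ) else 0) * (if Q then 1 else 0) = if P ∧ Q then 1 else 0 := by
  by_cases hP : P <;> by_cases hQ : Q <;> simp [hP, hQ]

lemma dot_smul_right (c : F) (x z : Fin d → F) :
    ∑ j, x j * (c • z) j = c * ∑ j, x j * z j := by
  rw [Finset.mul_sum]
  apply Finset.sum_congr rfl
  intro j _
  simp [Pi.smul_apply, smul_eq_mul]; ring

lemma Ksplit (ht : t ≠ 0) (hd : 2 ≤ d) (z z' : Fin d → F) :
    ∑ x : Fin d → F, Mk t x z * Mk t x z'
      = (if z = z' ∧ z ≠ 0 then (Fintype.card F : ℝ) ^ (d-1) else 0)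
        + (if z = 0 ∧ z' = 0 then (Fintype.card F : ℝ) ^ (d-2) else 0)
        - (if Par z z' then (Fintype.card F : ℝ) ^ (d-2) else 0) := by
  classical
  have hd1 : 1 ≤ d := by omega
  set qr : ℝ := (Fintype.card F : ℝ) with hqr
  have hq0 : qr ≠ 0 := ne_of_gt qr_pos
  have card_fun : (Fintype.card (Fin d → F) : ℝ) = qr ^ d := by
    rw [hqr]; push_cast [Fintype.card_fun]; simp
  have hpow2 : qr ^ d * (qr⁻¹ * qr⁻¹) = qr ^ (d-2) := by
    have h : d = (d-2) + 2 := by omega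
    rw [h, pow_add]
    field_simp
    ring
    rw [Nat.add_sub_cancel_left]
  have hpow1 : qr⁻¹ * qr ^ (d-1) = qr ^ (d-2) := by
    have h : d - 1 = (d-2) + 1 := by omega
    rw [h, pow_add]
    field_simp
  -- expansion
  have expand : ∑ x : Fin d → F, Mk t x z * Mk t x z'
      = (∑ x : Fin d → F, (if (∑ j, x j * z j) = t then (1:ℝ) else 0)
          * (if (∑ j, x j * z' j) = t then (1:ℝ) else 0))
        - qr⁻¹ * (∑ x : Fin d → F, (if (∑ j, x j * z j) = t then (1:ℝ) else 0))
        - qr⁻¹ * (∑ x : Fin d → F, (if (∑ j, x j * z' j) = t then (1:ℝ) else 0))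
        + qr ^ d * (qr⁻¹ * qr⁻¹) := by
    rw [← card_fun]
    rw [Finset.mul_sum, Finset.mul_sum, ← Finset.sum_sub_distrib, ← Finset.sum_sub_distrib]
    have h2 : ((Fintype.card (Fin d → F) : ℝ)) * (qr⁻¹ * qr⁻¹)
        = ∑ _x : Fin d → F, (qr⁻¹ * qr⁻¹) := by
      rw [Finset.sum_const, Finset.card_univ, nsmul_eq_mul]
    rw [h2, ← Finset.sum_add_distrib]
    apply Finset.sum_congr rfl
    intro x _
    rw [Mk, Mk, hqr]
    ring
  have zero_ind : ∀ x : Fin d → F,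
      (if (∑ j, x j * (0 : Fin d → F) j) = t then (1:ℝ) else 0) = 0 := by
    intro x
    rw [show (∑ j, x j * (0 : Fin d → F) j) = 0 by simp]
    simp [Ne.symm ht]
  by_cases hz : z = 0
  · subst hz
    have e1 : ∑ x : Fin d → F, (if (∑ j, x j * (0:Fin d → F) j) = t then (1:ℝ) else 0) = 0 :=
      Finset.sum_eq_zero (fun x _ => zero_ind x)
    have e12 : ∑ x : Fin d → F, (if (∑ j, x j * (0:Fin d → F) j) = t then (1:ℝ) else 0)
        * (if (∑ j, x j * z' j) = t then (1:ℝ) else 0) = 0 :=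
      Finset.sum_eq_zero (fun x _ => by rw [zero_ind x, zero_mul])
    have hP : ¬ Par (0 : Fin d → F) z' := by rw [par_def]; simp
    by_cases hz' : z' = 0
    · subst hz'
      rw [expand, e1, e12, hpow2]
      rw [if_neg (by simp : ¬ ((0:Fin d → F) = 0 ∧ (0:Fin d → F) ≠ 0)),
        if_pos ⟨rfl, rfl⟩, if_neg hP]
      ring
    · rw [expand, e1, e12, sum_ind hd1 hz' t, hpow2]
      rw [if_neg (by simp : ¬ ((0:Fin d → F) = z' ∧ (0:Fin d → F) ≠ 0)),
        if_neg (by simp [hz'] : ¬ ((0:Fin d → F) = 0 ∧ z' = 0)), if_neg hP]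
      rw [← hpow1]
      ring
  · have e1 : ∑ x : Fin d → F, (if (∑ j, x j * z j) = t then (1:ℝ) else 0) = qr ^ (d-1) :=
      sum_ind hd1 hz t
    by_cases hz' : z' = 0
    · subst hz'
      have e2 : ∑ x : Fin d → F, (if (∑ j, x j * (0:Fin d → F) j) = t then (1:ℝ) else 0) = 0 :=
        Finset.sum_eq_zero (fun x _ => zero_ind x)
      have e12 : ∑ x : Fin d → F, (if (∑ j, x j * z j) = t then (1:ℝ) else 0)
          * (if (∑ j, x j * (0:Fin d → F) j) = t then (1:ℝ) else 0) = 0 :=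
        Finset.sum_eq_zero (fun x _ => by rw [zero_ind x, mul_zero])
      have hP : ¬ Par z (0 : Fin d → F) := by rw [par_def]; simp
      rw [expand, e1, e2, e12, hpow2]
      rw [if_neg (by simp [hz] : ¬ (z = (0:Fin d → F) ∧ z ≠ 0)),
        if_neg (by simp [hz] : ¬ (z = 0 ∧ (0:Fin d → F) = 0)), if_neg hP]
      rw [← hpow1]
      ring
    · have e2 : ∑ x : Fin d → F, (if (∑ j, x j * z' j) = t then (1:ℝ) else 0) = qr ^ (d-1) :=
        sum_ind hd1 hz' t
      by_cases hzz : z = z'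
      · subst hzz
        have e12 : ∑ x : Fin d → F, (if (∑ j, x j * z j) = t then (1:ℝ) else 0)
            * (if (∑ j, x j * z j) = t then (1:ℝ) else 0) = qr ^ (d-1) := by
          rw [← e1]
          apply Finset.sum_congr rfl
          intro x _
          by_cases hx : (∑ j, x j * z j) = t <;> simp [hx]
        have hP : Par z z := by
          rw [par_def]
          exact ⟨hz, hz, 1, (one_smul F z).symm⟩
        rw [expand, e1, e12, hpow2]
        rw [if_pos ⟨rfl, hz⟩, if_neg (by simp [hz] : ¬ (z = 0 ∧ z = 0)), if_pos hP]
        rw [← hpow1]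
        ring
      · by_cases hPar : Par z z'
        · obtain ⟨-, -, c, hc⟩ := (par_def z z').mp hPar
          have hc0 : c ≠ 0 := by
            rintro rfl; rw [zero_smul] at hc; exact hz' hc
          have hc1 : c ≠ 1 := by
            rintro rfl; rw [one_smul] at hc; exact hzz hc.symm
          have e12 : ∑ x : Fin d → F, (if (∑ j, x j * z j) = t then (1:ℝ) else 0)
              * (if (∑ j, x j * z' j) = t then (1:ℝ) else 0) = 0 := by
            apply Finset.sum_eq_zero
            intro x _
            by_cases hx : (∑ j, x j * z j) = t
            · have : (∑ j, x j * z' j) ≠ t := by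
                rw [hc, dot_smul_right, hx]
                intro hct
                have h2 : (c - 1) * t = 0 := by rw [sub_mul, one_mul, hct, sub_self]
                rcases mul_eq_zero.mp h2 with h | h
                · exact hc1 (sub_eq_zero.mp h)
                · exact ht h
              simp [this]
            · simp [hx]
          rw [expand, e1, e2, e12, hpow2]
          rw [if_neg (by tauto : ¬ (z = z' ∧ z ≠ 0)),
            if_neg (by tauto : ¬ (z = 0 ∧ z' = 0)), if_pos hPar]
          rw [← hpow1]
          ring
        · have hnp : ¬ ∃ c : F, z' = c • z := by
            intro hcex
            exact hPar ((par_def z z').mpr ⟨hz, hz', hcex⟩)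
          have e12 : ∑ x : Fin d → F, (if (∑ j, x j * z j) = t then (1:ℝ) else 0)
              * (if (∑ j, x j * z' j) = t then (1:ℝ) else 0) = qr ^ (d-2) := by
            rw [Finset.sum_congr rfl (fun x _ => ind_mul _ _), Finset.sum_boole,
              count_pair hd hz hnp t t, hqr]
            push_cast
            ring
          rw [expand, e1, e2, e12, hpow2]
          rw [if_neg (by tauto : ¬ (z = z' ∧ z ≠ 0)),
            if_neg (by tauto : ¬ (z = 0 ∧ z' = 0)), if_neg hPar]
          rw [← hpow1]
          ring

lemma key_bound (ht : t ≠ 0) (hd : 2 ≤ d) (b : (Fin d → F) → ℝ) :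
    ∑ x : Fin d → F, (∑ z : Fin d → F, Mk t x z * b z)^2
      ≤ (Fintype.card F : ℝ)^(d-1) * ∑ z : Fin d → F, (b z)^2 := by
  classical
  set qr : ℝ := (Fintype.card F : ℝ) with hqr
  have hq1 : (1:ℝ) ≤ qr := by
    rw [hqr]; exact_mod_cast Fintype.card_pos
  have step1 : ∑ x : Fin d → F, (∑ z : Fin d → F, Mk t x z * b z)^2
      = ∑ z : Fin d → F, ∑ z' : Fin d → F,
          (b z * b z') * ∑ x : Fin d → F, Mk t x z * Mk t x z' := by
    have e1 : ∀ x : Fin d → F, (∑ z : Fin d → F, Mk t x z * b z)^2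
        = ∑ z : Fin d → F, ∑ z' : Fin d → F, (Mk t x z * b z) * (Mk t x z' * b z') := by
      intro x
      rw [sq, Finset.sum_mul_sum]
    rw [Finset.sum_congr rfl (fun x _ => e1 x), Finset.sum_comm]
    apply Finset.sum_congr rfl
    intro z _
    rw [Finset.sum_comm]
    apply Finset.sum_congr rfl
    intro z' _
    rw [Finset.mul_sum]
    apply Finset.sum_congr rfl
    intro x _
    ring
  have step2 : ∑ z : Fin d → F, ∑ z' : Fin d → F,
          (b z * b z') * ∑ x : Fin d → F, Mk t x z * Mk t x z'
      = (∑ z : Fin d → F, ∑ z' : Fin d → F,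
          (b z * b z') * (if z = z' ∧ z ≠ 0 then qr ^ (d-1) else 0))
        + (∑ z : Fin d → F, ∑ z' : Fin d → F,
          (b z * b z') * (if z = 0 ∧ z' = 0 then qr ^ (d-2) else 0))
        - (∑ z : Fin d → F, ∑ z' : Fin d → F,
          (b z * b z') * (if Par z z' then qr ^ (d-2) else 0)) := by
    rw [← Finset.sum_add_distrib, ← Finset.sum_sub_distrib]
    apply Finset.sum_congr rfl
    intro z _
    rw [← Finset.sum_add_distrib, ← Finset.sum_sub_distrib]
    apply Finset.sum_congr rfl
    intro z' _
    rw [Ksplit t ht hd z z']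
    ring
  have eA : ∑ z : Fin d → F, ∑ z' : Fin d → F,
      (b z * b z') * (if z = z' ∧ z ≠ 0 then qr ^ (d-1) else 0)
      = ∑ z : Fin d → F, (if z ≠ 0 then qr ^ (d-1) * (b z)^2 else 0) := by
    apply Finset.sum_congr rfl
    intro z _
    rw [Finset.sum_eq_single z]
    · by_cases hz : z = 0 <;> simp [hz, sq] <;> ring
    · intro z' _ hne
      rw [if_neg (by tauto : ¬ (z = z' ∧ z ≠ 0)), mul_zero]
    · intro h; exact absurd (mem_univ z) h
  have eB : ∑ z : Fin d → F, ∑ z' : Fin d → F,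
      (b z * b z') * (if z = 0 ∧ z' = 0 then qr ^ (d-2) else 0)
      = qr ^ (d-2) * (b 0)^2 := by
    rw [Finset.sum_eq_single 0]
    · rw [Finset.sum_eq_single 0]
      · simp [sq]; ring
      · intro z' _ hne
        rw [if_neg (by tauto : ¬ ((0:Fin d → F) = 0 ∧ z' = 0)), mul_zero]
      · intro h; exact absurd (mem_univ 0) h
    · intro z _ hne
      apply Finset.sum_eq_zero
      intro z' _
      rw [if_neg (by tauto : ¬ (z = 0 ∧ z' = 0)), mul_zero]
    · intro h; exact absurd (mem_univ 0) h
  have eC : 0 ≤ ∑ z : Fin d → F, ∑ z' : Fin d → F,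
      (b z * b z') * (if Par z z' then qr ^ (d-2) else 0) := by
    have e : ∀ z z' : Fin d → F, (b z * b z') * (if Par z z' then qr ^ (d-2) else 0)
        = qr ^ (d-2) * (if Par z z' then b z * b z' else 0) := by
      intro z z'
      by_cases hp : Par z z' <;> simp [hp] <;> ring
    simp_rw [e, ← Finset.mul_sum]
    exact mul_nonneg (by positivity) (T_nonneg b)
  have sum_split : ∑ z : Fin d → F, (if z ≠ 0 then qr ^ (d-1) * (b z)^2 else 0)
      = qr ^ (d-1) * (∑ z : Fin d → F, (b z)^2) - qr ^ (d-1) * (b 0)^2 := by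
    have e0 : ∀ z : Fin d → F, (if z ≠ 0 then qr ^ (d-1) * (b z)^2 else 0)
        = qr ^ (d-1) * (b z)^2 - (if z = 0 then qr ^ (d-1) * (b z)^2 else 0) := by
      intro z
      by_cases hz : z = 0 <;> simp [hz]
    rw [Finset.sum_congr rfl (fun z _ => e0 z), Finset.sum_sub_distrib,
      Finset.sum_ite_eq' univ 0 (fun z => qr ^ (d-1) * (b z)^2), if_pos (mem_univ 0),
      ← Finset.mul_sum]
  -- combine
  rw [step1, step2, eA, eB, sum_split]
  have hpow_le : qr ^ (d-2) ≤ qr ^ (d-1) := pow_le_pow_right₀ hq1 (by omega)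
  have hb0 : (0:ℝ) ≤ (b 0)^2 := sq_nonneg _
  nlinarith [eC]

lemma cauchy {α : Type*} (s : Finset α) (u v : α → ℝ) :
    |∑ i ∈ s, u i * v i| ≤ Real.sqrt (∑ i ∈ s, u i ^ 2) * Real.sqrt (∑ i ∈ s, v i ^ 2) := by
  rw [← Real.sqrt_sq_eq_abs, ← Real.sqrt_mul (by positivity)]
  exact Real.sqrt_le_sqrt (Finset.sum_mul_sq_le_sq_mul_sq s u v)

section Bounds
variable {t : F}

lemma bilinear_bound (ht : t ≠ 0) (hd : 2 ≤ d) (a c : (Fin d → F) → ℝ) :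
    |∑ x : Fin d → F, ∑ z : Fin d → F, a x * c z * Mk t x z|
      ≤ Real.sqrt ((Fintype.card F : ℝ)^(d-1)) * Real.sqrt (∑ x : Fin d → F, a x ^ 2)
        * Real.sqrt (∑ z : Fin d → F, c z ^ 2) := by
  have e1 : ∑ x : Fin d → F, ∑ z : Fin d → F, a x * c z * Mk t x z
      = ∑ x : Fin d → F, a x * (∑ z : Fin d → F, Mk t x z * c z) := by
    apply Finset.sum_congr rfl
    intro x _
    rw [Finset.mul_sum]
    exact Finset.sum_congr rfl (fun z _ => by ring)
  rw [e1]
  calc |∑ x : Fin d → F, a x * (∑ z : Fin d → F, Mk t x z * c z)|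
      ≤ Real.sqrt (∑ x : Fin d → F, a x ^ 2)
        * Real.sqrt (∑ x : Fin d → F, (∑ z : Fin d → F, Mk t x z * c z) ^ 2) :=
        cauchy univ _ _
    _ ≤ Real.sqrt (∑ x : Fin d → F, a x ^ 2)
        * Real.sqrt ((Fintype.card F : ℝ)^(d-1) * ∑ z : Fin d → F, c z ^ 2) := by
        apply mul_le_mul_of_nonneg_left _ (Real.sqrt_nonneg _)
        exact Real.sqrt_le_sqrt (key_bound t ht hd c)
    _ = Real.sqrt ((Fintype.card F : ℝ)^(d-1)) * Real.sqrt (∑ x : Fin d → F, a x ^ 2)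
        * Real.sqrt (∑ z : Fin d → F, c z ^ 2) := by
        rw [Real.sqrt_mul (by positivity)]
        ring

lemma tensor_bound (ht : t ≠ 0) (hd : 2 ≤ d) (a c : (Fin d → F) × (Fin d → F) → ℝ) :
    |∑ x : Fin d → F, ∑ y : Fin d → F, ∑ z : Fin d → F, ∑ w : Fin d → F,
        a (x,y) * c (z,w) * (Mk t x z * Mk t y w)|
      ≤ (Fintype.card F : ℝ)^(d-1)
        * Real.sqrt (∑ x : Fin d → F, ∑ y : Fin d → F, a (x,y) ^ 2)
        * Real.sqrt (∑ z : Fin d → F, ∑ w : Fin d → F, c (z,w) ^ 2) := by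
  classical
  set qr : ℝ := (Fintype.card F : ℝ) with hqr
  obtain ⟨h, hh⟩ : ∃ h : (Fin d → F) → (Fin d → F) → ℝ,
      ∀ x w, h x w = ∑ z : Fin d → F, Mk t x z * c (z,w) := ⟨_, fun _ _ => rfl⟩
  obtain ⟨S, hS⟩ : ∃ S : (Fin d → F) → (Fin d → F) → ℝ,
      ∀ x y, S x y = ∑ w : Fin d → F, Mk t y w * h x w := ⟨_, fun _ _ => rfl⟩
  have e1 : ∑ x : Fin d → F, ∑ y : Fin d → F, ∑ z : Fin d → F, ∑ w : Fin d → F,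
      a (x,y) * c (z,w) * (Mk t x z * Mk t y w)
      = ∑ x : Fin d → F, ∑ y : Fin d → F, a (x,y) * S x y := by
    apply Finset.sum_congr rfl; intro x _
    apply Finset.sum_congr rfl; intro y _
    rw [hS, Finset.mul_sum]
    rw [Finset.sum_comm]
    apply Finset.sum_congr rfl; intro w _
    rw [hh, Finset.mul_sum, Finset.mul_sum]
    apply Finset.sum_congr rfl; intro z _
    ring
  have e2 : ∑ x : Fin d → F, ∑ y : Fin d → F, (S x y)^2
      ≤ (qr^(d-1))^2 * ∑ z : Fin d → F, ∑ w : Fin d → F, c (z,w) ^ 2 := by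
    have step1 : ∀ x : Fin d → F, ∑ y : Fin d → F, (S x y)^2
        ≤ qr^(d-1) * ∑ w : Fin d → F, (h x w)^2 := by
      intro x
      have := key_bound t ht hd (fun w => h x w)
      calc ∑ y : Fin d → F, (S x y)^2
          = ∑ y : Fin d → F, (∑ w : Fin d → F, Mk t y w * h x w)^2 :=
            Finset.sum_congr rfl (fun y _ => by rw [hS])
        _ ≤ qr^(d-1) * ∑ w : Fin d → F, (h x w)^2 := key_bound t ht hd _
    have step2 : ∀ w : Fin d → F, ∑ x : Fin d → F, (h x w)^2
        ≤ qr^(d-1) * ∑ z : Fin d → F, c (z,w)^2 := by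
      intro w
      calc ∑ x : Fin d → F, (h x w)^2
          = ∑ x : Fin d → F, (∑ z : Fin d → F, Mk t x z * c (z,w))^2 :=
            Finset.sum_congr rfl (fun x _ => by rw [hh])
        _ ≤ qr^(d-1) * ∑ z : Fin d → F, c (z,w)^2 := key_bound t ht hd _
    calc ∑ x : Fin d → F, ∑ y : Fin d → F, (S x y)^2
        ≤ ∑ x : Fin d → F, qr^(d-1) * ∑ w : Fin d → F, (h x w)^2 :=
          Finset.sum_le_sum (fun x _ => step1 x)
      _ = qr^(d-1) * ∑ w : Fin d → F, ∑ x : Fin d → F, (h x w)^2 := by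
          rw [← Finset.mul_sum, Finset.sum_comm]
      _ ≤ qr^(d-1) * ∑ w : Fin d → F, (qr^(d-1) * ∑ z : Fin d → F, c (z,w)^2) := by
          apply mul_le_mul_of_nonneg_left _ (by positivity)
          exact Finset.sum_le_sum (fun w _ => step2 w)
      _ = (qr^(d-1))^2 * ∑ z : Fin d → F, ∑ w : Fin d → F, c (z,w) ^ 2 := by
          rw [← Finset.mul_sum, Finset.sum_comm]
          ring
  have cs : |∑ x : Fin d → F, ∑ y : Fin d → F, a (x,y) * S x y|
      ≤ Real.sqrt (∑ x : Fin d → F, ∑ y : Fin d → F, a (x,y) ^ 2)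
        * Real.sqrt (∑ x : Fin d → F, ∑ y : Fin d → F, (S x y) ^ 2) := by
    have h1 : ∑ x : Fin d → F, ∑ y : Fin d → F, a (x,y) * S x y
        = ∑ p : (Fin d → F) × (Fin d → F), a p * S p.1 p.2 := by
      rw [Fintype.sum_prod_type]
    have h2 : ∑ x : Fin d → F, ∑ y : Fin d → F, a (x,y) ^ 2
        = ∑ p : (Fin d → F) × (Fin d → F), a p ^ 2 := by
      rw [Fintype.sum_prod_type]
    have h3 : ∑ x : Fin d → F, ∑ y : Fin d → F, (S x y) ^ 2
        = ∑ p : (Fin d → F) × (Fin d → F), (S p.1 p.2) ^ 2 := by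
      rw [Fintype.sum_prod_type]
    rw [h1, h2, h3]
    exact cauchy univ _ _
  rw [e1]
  calc |∑ x : Fin d → F, ∑ y : Fin d → F, a (x,y) * S x y|
      ≤ Real.sqrt (∑ x : Fin d → F, ∑ y : Fin d → F, a (x,y) ^ 2)
        * Real.sqrt (∑ x : Fin d → F, ∑ y : Fin d → F, (S x y) ^ 2) := cs
    _ ≤ Real.sqrt (∑ x : Fin d → F, ∑ y : Fin d → F, a (x,y) ^ 2)
        * Real.sqrt ((qr^(d-1))^2 * ∑ z : Fin d → F, ∑ w : Fin d → F, c (z,w) ^ 2) := by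
        apply mul_le_mul_of_nonneg_left _ (Real.sqrt_nonneg _)
        exact Real.sqrt_le_sqrt e2
    _ = qr^(d-1) * Real.sqrt (∑ x : Fin d → F, ∑ y : Fin d → F, a (x,y) ^ 2)
        * Real.sqrt (∑ z : Fin d → F, ∑ w : Fin d → F, c (z,w) ^ 2) := by
        rw [Real.sqrt_mul (by positivity), Real.sqrt_sq (by positivity)]
        ring
end Bounds

theorem functional_prod (F : Type) [Field F] [Fintype F] [DecidableEq F]
    (d : ℕ) (hd : 2 ≤ d) (t : F) (ht : t ≠ 0)
    (q : ℝ) (hq : q = (Fintype.card F : ℝ))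
    (f g : (Fin d → F) × (Fin d → F) → ℝ)
    (hf : ∀ p, 0 ≤ f p) (hg : ∀ p, 0 ≤ g p) :
    |(∑ x : Fin d → F, ∑ y : Fin d → F, ∑ z : Fin d → F, ∑ w : Fin d → F,
        if (∑ j, x j * z j = t) ∧ (∑ j, y j * w j = t) then
          f (x, y) * g (z, w) else 0) -
      q ^ (-2 : ℝ) * (∑ x : Fin d → F, ∑ y : Fin d → F, f (x, y)) *
        (∑ z : Fin d → F, ∑ w : Fin d → F, g (z, w))| ≤
      2 * q ^ ((d : ℝ) - 1) *
        Real.sqrt (∑ x : Fin d → F, ∑ y : Fin d → F, f (x, y) ^ 2) *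
        Real.sqrt (∑ z : Fin d → F, ∑ w : Fin d → F, g (z, w) ^ 2) +
      q ^ (((d : ℝ) - 3) / 2) *
        (Real.sqrt (∑ x : Fin d → F, (∑ y : Fin d → F, f (x, y)) ^ 2) *
           Real.sqrt (∑ z : Fin d → F, (∑ w : Fin d → F, g (z, w)) ^ 2) +
         Real.sqrt (∑ y : Fin d → F, (∑ x : Fin d → F, f (x, y)) ^ 2) *
           Real.sqrt (∑ w : Fin d → F, (∑ z : Fin d → F, g (z, w)) ^ 2)) := by
  classical
  subst hq
  set qr : ℝ := (Fintype.card F : ℝ) with hqr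
  have hqpos : (0:ℝ) < qr := by rw [hqr]; exact_mod_cast Fintype.card_pos
  -- rpow conversions
  have hc1 : qr ^ ((d : ℝ) - 1) = qr ^ (d - 1 : ℕ) := by
    rw [show ((d:ℝ) - 1) = ((d - 1 : ℕ) : ℝ) by
      rw [Nat.cast_sub (by omega)]; norm_num]
    exact Real.rpow_natCast qr (d-1)
  have hc3 : qr ^ (-2 : ℝ) = qr⁻¹ * qr⁻¹ := by
    rw [show (-2 : ℝ) = ((-2 : ℤ) : ℝ) by norm_num, Real.rpow_intCast]
    rw [zpow_neg, show ((2:ℤ)) = ((2:ℕ):ℤ) by norm_num, zpow_natCast, sq, mul_inv]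
  have hc2 : qr ^ (((d : ℝ) - 3) / 2) = qr⁻¹ * Real.sqrt (qr ^ (d - 1 : ℕ)) := by
    rw [← Real.rpow_natCast qr (d-1), Real.sqrt_eq_rpow,
      ← Real.rpow_mul (le_of_lt hqpos), ← Real.rpow_neg_one qr,
      ← Real.rpow_add hqpos]
    congr 1
    rw [Nat.cast_sub (by omega : 1 ≤ d)]
    push_cast
    ring
  -- abbreviations
  have hqinv : (0:ℝ) ≤ qr⁻¹ := by positivity
  have expand_prod : (∑ x : Fin d → F, ∑ y : Fin d → F, f (x, y))
      * (∑ z : Fin d → F, ∑ w : Fin d → F, g (z, w))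
      = ∑ x : Fin d → F, ∑ y : Fin d → F, ∑ z : Fin d → F, ∑ w : Fin d → F,
          f (x, y) * g (z, w) := by
    rw [Finset.sum_mul]
    apply Finset.sum_congr rfl; intro x _
    rw [Finset.sum_mul]
    apply Finset.sum_congr rfl; intro y _
    rw [Finset.mul_sum]
    apply Finset.sum_congr rfl; intro z _
    rw [Finset.mul_sum]
  have prod_eq : qr ^ (-2:ℝ) * (∑ x : Fin d → F, ∑ y : Fin d → F, f (x, y))
      * (∑ z : Fin d → F, ∑ w : Fin d → F, g (z, w))
      = ∑ x : Fin d → F, ∑ y : Fin d → F, ∑ z : Fin d → F, ∑ w : Fin d → F,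
          qr⁻¹ * qr⁻¹ * (f (x, y) * g (z, w)) := by
    rw [hc3, mul_assoc, expand_prod]
    simp_rw [Finset.mul_sum]
  have point : ∀ x y z w : Fin d → F,
      (if (∑ j, x j * z j = t) ∧ (∑ j, y j * w j = t) then f (x, y) * g (z, w) else 0)
        - qr⁻¹ * qr⁻¹ * (f (x, y) * g (z, w))
      = f (x, y) * g (z, w) * (Mk t x z * Mk t y w)
        + qr⁻¹ * (f (x, y) * g (z, w) * Mk t x z)
        + qr⁻¹ * (f (x, y) * g (z, w) * Mk t y w) := by
    intro x y z w
    have hA : (if (∑ j, x j * z j) = t then (1:ℝ) else 0) = Mk t x z + qr⁻¹ := by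
      simp only [Mk, hqr]; ring
    have hB : (if (∑ j, y j * w j) = t then (1:ℝ) else 0) = Mk t y w + qr⁻¹ := by
      simp only [Mk, hqr]; ring
    have hkey : (if (∑ j, x j * z j = t) ∧ (∑ j, y j * w j = t)
        then f (x, y) * g (z, w) else 0)
        = f (x, y) * g (z, w) * ((Mk t x z + qr⁻¹) * (Mk t y w + qr⁻¹)) := by
      rw [← hA, ← hB, ind_mul, mul_ite, mul_one, mul_zero]
    rw [hkey]
    ring
  have main_eq : (∑ x : Fin d → F, ∑ y : Fin d → F, ∑ z : Fin d → F, ∑ w : Fin d → F,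
        if (∑ j, x j * z j = t) ∧ (∑ j, y j * w j = t) then
          f (x, y) * g (z, w) else 0) -
      qr ^ (-2 : ℝ) * (∑ x : Fin d → F, ∑ y : Fin d → F, f (x, y)) *
        (∑ z : Fin d → F, ∑ w : Fin d → F, g (z, w))
      = (∑ x : Fin d → F, ∑ y : Fin d → F, ∑ z : Fin d → F, ∑ w : Fin d → F,
          f (x, y) * g (z, w) * (Mk t x z * Mk t y w))
        + qr⁻¹ * (∑ x : Fin d → F, ∑ y : Fin d → F, ∑ z : Fin d → F, ∑ w : Fin d → F,
          f (x, y) * g (z, w) * Mk t x z)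
        + qr⁻¹ * (∑ x : Fin d → F, ∑ y : Fin d → F, ∑ z : Fin d → F, ∑ w : Fin d → F,
          f (x, y) * g (z, w) * Mk t y w) := by
    rw [prod_eq]
    simp_rw [← Finset.sum_sub_distrib]
    rw [Finset.sum_congr rfl (fun x _ => Finset.sum_congr rfl (fun y _ =>
      Finset.sum_congr rfl (fun z _ => Finset.sum_congr rfl (fun w _ => point x y z w))))]
    simp_rw [Finset.sum_add_distrib, ← Finset.mul_sum]
  have T2_eq : (∑ x : Fin d → F, ∑ z : Fin d → F,
        (∑ y : Fin d → F, f (x, y)) * (∑ w : Fin d → F, g (z, w)) * Mk t x z)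
      = ∑ x : Fin d → F, ∑ y : Fin d → F, ∑ z : Fin d → F, ∑ w : Fin d → F,
          f (x, y) * g (z, w) * Mk t x z := by
    apply Finset.sum_congr rfl; intro x _
    rw [Finset.sum_comm]
    apply Finset.sum_congr rfl; intro z _
    rw [Finset.sum_mul_sum, Finset.sum_mul]
    apply Finset.sum_congr rfl; intro y _
    rw [Finset.sum_mul]
  have T3_eq : (∑ y : Fin d → F, ∑ w : Fin d → F,
        (∑ x : Fin d → F, f (x, y)) * (∑ z : Fin d → F, g (z, w)) * Mk t y w)
      = ∑ x : Fin d → F, ∑ y : Fin d → F, ∑ z : Fin d → F, ∑ w : Fin d → F,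
          f (x, y) * g (z, w) * Mk t y w := by
    symm
    calc ∑ x : Fin d → F, ∑ y : Fin d → F, ∑ z : Fin d → F, ∑ w : Fin d → F,
          f (x, y) * g (z, w) * Mk t y w
        = ∑ y : Fin d → F, ∑ x : Fin d → F, ∑ z : Fin d → F, ∑ w : Fin d → F,
          f (x, y) * g (z, w) * Mk t y w := Finset.sum_comm
      _ = ∑ y : Fin d → F, ∑ x : Fin d → F, ∑ w : Fin d → F, ∑ z : Fin d → F,
          f (x, y) * g (z, w) * Mk t y w :=
          Finset.sum_congr rfl (fun y _ => Finset.sum_congr rfl (fun x _ => Finset.sum_comm))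
      _ = ∑ y : Fin d → F, ∑ w : Fin d → F, ∑ x : Fin d → F, ∑ z : Fin d → F,
          f (x, y) * g (z, w) * Mk t y w :=
          Finset.sum_congr rfl (fun y _ => Finset.sum_comm)
      _ = ∑ y : Fin d → F, ∑ w : Fin d → F,
          (∑ x : Fin d → F, f (x, y)) * (∑ z : Fin d → F, g (z, w)) * Mk t y w := by
          apply Finset.sum_congr rfl; intro y _
          apply Finset.sum_congr rfl; intro w _
          symm
          rw [Finset.sum_mul_sum, Finset.sum_mul]
          apply Finset.sum_congr rfl; intro x _
          rw [Finset.sum_mul]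
  -- the three bounds
  have hb4 : |∑ x : Fin d → F, ∑ y : Fin d → F, ∑ z : Fin d → F, ∑ w : Fin d → F,
        f (x, y) * g (z, w) * (Mk t x z * Mk t y w)|
      ≤ qr ^ (d-1) * Real.sqrt (∑ x : Fin d → F, ∑ y : Fin d → F, f (x, y) ^ 2)
        * Real.sqrt (∑ z : Fin d → F, ∑ w : Fin d → F, g (z, w) ^ 2) :=
    tensor_bound ht hd f g
  have hb2 : |∑ x : Fin d → F, ∑ z : Fin d → F,
        (∑ y : Fin d → F, f (x, y)) * (∑ w : Fin d → F, g (z, w)) * Mk t x z|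
      ≤ Real.sqrt (qr ^ (d-1))
        * Real.sqrt (∑ x : Fin d → F, (∑ y : Fin d → F, f (x, y)) ^ 2)
        * Real.sqrt (∑ z : Fin d → F, (∑ w : Fin d → F, g (z, w)) ^ 2) :=
    bilinear_bound ht hd (fun x => ∑ y : Fin d → F, f (x, y))
      (fun z => ∑ w : Fin d → F, g (z, w))
  have hb3 : |∑ y : Fin d → F, ∑ w : Fin d → F,
        (∑ x : Fin d → F, f (x, y)) * (∑ z : Fin d → F, g (z, w)) * Mk t y w|
      ≤ Real.sqrt (qr ^ (d-1))
        * Real.sqrt (∑ y : Fin d → F, (∑ x : Fin d → F, f (x, y)) ^ 2)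
        * Real.sqrt (∑ w : Fin d → F, (∑ z : Fin d → F, g (z, w)) ^ 2) :=
    bilinear_bound ht hd (fun y => ∑ x : Fin d → F, f (x, y))
      (fun w => ∑ z : Fin d → F, g (z, w))
  rw [main_eq, ← T2_eq, ← T3_eq, hc1, hc2]
  set A := ∑ x : Fin d → F, ∑ y : Fin d → F, ∑ z : Fin d → F, ∑ w : Fin d → F,
    f (x, y) * g (z, w) * (Mk t x z * Mk t y w) with hA
  set B := ∑ x : Fin d → F, ∑ z : Fin d → F,
    (∑ y : Fin d → F, f (x, y)) * (∑ w : Fin d → F, g (z, w)) * Mk t x z with hB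
  set C := ∑ y : Fin d → F, ∑ w : Fin d → F,
    (∑ x : Fin d → F, f (x, y)) * (∑ z : Fin d → F, g (z, w)) * Mk t y w with hC
  have habs : |A + qr⁻¹ * B + qr⁻¹ * C| ≤ |A| + qr⁻¹ * |B| + qr⁻¹ * |C| := by
    calc |A + qr⁻¹ * B + qr⁻¹ * C| ≤ |A + qr⁻¹ * B| + |qr⁻¹ * C| := abs_add_le _ _
      _ ≤ |A| + |qr⁻¹ * B| + |qr⁻¹ * C| := by
          have := abs_add_le A (qr⁻¹ * B)
          linarith
      _ = |A| + qr⁻¹ * |B| + qr⁻¹ * |C| := by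
          rw [abs_mul, abs_mul, abs_of_nonneg hqinv]
  have sqnn : (0:ℝ) ≤ qr ^ (d-1) * Real.sqrt (∑ x : Fin d → F, ∑ y : Fin d → F, f (x, y) ^ 2)
      * Real.sqrt (∑ z : Fin d → F, ∑ w : Fin d → F, g (z, w) ^ 2) := by positivity
  have h2' := mul_le_mul_of_nonneg_left hb2 hqinv
  have h3' := mul_le_mul_of_nonneg_left hb3 hqinv
  calc |A + qr⁻¹ * B + qr⁻¹ * C| ≤ |A| + qr⁻¹ * |B| + qr⁻¹ * |C| := habs
    _ ≤ (qr ^ (d-1) * Real.sqrt (∑ x : Fin d → F, ∑ y : Fin d → F, f (x, y) ^ 2)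
          * Real.sqrt (∑ z : Fin d → F, ∑ w : Fin d → F, g (z, w) ^ 2))
        + qr⁻¹ * (Real.sqrt (qr ^ (d-1))
          * Real.sqrt (∑ x : Fin d → F, (∑ y : Fin d → F, f (x, y)) ^ 2)
          * Real.sqrt (∑ z : Fin d → F, (∑ w : Fin d → F, g (z, w)) ^ 2))
        + qr⁻¹ * (Real.sqrt (qr ^ (d-1))
          * Real.sqrt (∑ y : Fin d → F, (∑ x : Fin d → F, f (x, y)) ^ 2)
          * Real.sqrt (∑ w : Fin d → F, (∑ z : Fin d → F, g (z, w)) ^ 2)) := by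
        linarith [hb4, h2', h3']
    _ ≤ 2 * qr ^ (d-1) * Real.sqrt (∑ x : Fin d → F, ∑ y : Fin d → F, f (x, y) ^ 2)
          * Real.sqrt (∑ z : Fin d → F, ∑ w : Fin d → F, g (z, w) ^ 2)
        + qr⁻¹ * Real.sqrt (qr ^ (d-1)) *
          (Real.sqrt (∑ x : Fin d → F, (∑ y : Fin d → F, f (x, y)) ^ 2) *
             Real.sqrt (∑ z : Fin d → F, (∑ w : Fin d → F, g (z, w)) ^ 2) +
           Real.sqrt (∑ y : Fin d → F, (∑ x : Fin d → F, f (x, y)) ^ 2) *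
             Real.sqrt (∑ w : Fin d → F, (∑ z : Fin d → F, g (z, w)) ^ 2)) := by
        nlinarith [sqnn]
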